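/- Let (X,T) be a topological dynamical system and A : X → GL(d,ℝ) continuous with Φ_A almost additive (almost multiplicative with constant C > 0). Suppose f ∈ C(X) satisfies lim_{n→∞} (1/n)‖log‖A^n(·)‖ − S_n f‖_∞ = 0. Then for every T-invariant Borel probability measure μ, the Lyapunov exponent equals the Birkhoff integral: χ(μ, A) = ∫ f dμ; in particular the Lyapunov maximizing measures of A coincide with the Birkhoff maximizing measures of f, and β(A) = β(f). -/

import Mathlib

open MeasureTheory Filter Topology

/-- The cocycle product `A^n(x) = A(T^{n-1}x) ⋯ A(Tx) A(x)`. -/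
noncomputable def cocycleProd {X : Type*} {d : ℕ} (T : X → X)
    (A : X → (EuclideanSpace ℝ (Fin d) →L[ℝ] EuclideanSpace ℝ (Fin d))) :
    ℕ → X → (EuclideanSpace ℝ (Fin d) →L[ℝ] EuclideanSpace ℝ (Fin d))
  | 0 => fun _ => 1
  | n + 1 => fun x => A (T^[n] x) * cocycleProd T A n x

/-- The top Lyapunov exponent `χ(μ, A) = lim_n (1/n) ∫ log ‖A^n‖ dμ`, which by
subadditivity equals `inf_{n ≥ 1} (1/n) ∫ log ‖A^n‖ dμ`. -/
noncomputable def lyap {X : Type*} [MeasurableSpace X] {d : ℕ} (T : X → X)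
    (A : X → (EuclideanSpace ℝ (Fin d) →L[ℝ] EuclideanSpace ℝ (Fin d)))
    (μ : Measure X) : ℝ :=
  sInf {r : ℝ | ∃ n : ℕ, 1 ≤ n ∧
    r = (1 / n : ℝ) * ∫ x, Real.log ‖cocycleProd T A n x‖ ∂μ}


section Aux

open MeasureTheory Filter Topology

private theorem key_lemma {X : Type*} [MetricSpace X] [CompactSpace X] [Nonempty X]
    [MeasurableSpace X] [BorelSpace X]
    (T : X ≃ₜ X) (g : ℕ → X → ℝ) (hg : ∀ n, Continuous (g n))
    (hsub : ∀ m n x, g (m + n) x ≤ g m x + g n ((⇑T)^[m] x))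
    (f : C(X, ℝ))
    (happrox : Tendsto (fun n : ℕ => (1 / n : ℝ) *
        (⨆ x : X, |g n x - ∑ k ∈ Finset.range n, f ((⇑T)^[k] x)|)) atTop (𝓝 0))
    (μ : Measure X) (hμ : IsProbabilityMeasure μ) (hinv : μ.map (⇑T) = μ) :
    sInf {r : ℝ | ∃ n : ℕ, 1 ≤ n ∧ r = (1 / n : ℝ) * ∫ x, g n x ∂μ} = ∫ x, f x ∂μ := by
  have hint : ∀ h : X → ℝ, Continuous h → Integrable h μ := fun h hh =>
    integrableOn_univ.mp (hh.continuousOn.integrableOn_compact isCompact_univ)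
  have hint2 : ∀ (h : X → ℝ) (k : ℕ), Continuous h →
      Integrable (fun x => h ((⇑T)^[k] x)) μ := fun h k hh =>
    hint (fun x => h ((⇑T)^[k] x)) (hh.comp (T.continuous.iterate k))
  -- integral invariance
  have hcompT : ∀ h : X → ℝ, Continuous h → ∫ x, h (T x) ∂μ = ∫ x, h x ∂μ := by
    intro h hh
    conv_rhs => rw [← hinv]
    rw [integral_map T.continuous.measurable.aemeasurable
      (hh.aestronglyMeasurable)]
  have hcompTk : ∀ (h : X → ℝ), Continuous h → ∀ k : ℕ,
      ∫ x, h ((⇑T)^[k] x) ∂μ = ∫ x, h x ∂μ := by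
    intro h hh k
    induction k with
    | zero => simp
    | succ k ih =>
      have h1 : ∀ x : X, h ((⇑T)^[k + 1] x) = (fun y => h ((⇑T)^[k] y)) (T x) := by
        intro x
        simp [Function.iterate_succ_apply]
      calc ∫ x, h ((⇑T)^[k + 1] x) ∂μ = ∫ x, (fun y => h ((⇑T)^[k] y)) (T x) ∂μ := by
            simp_rw [h1]
        _ = ∫ x, h ((⇑T)^[k] x) ∂μ := hcompT _ (hh.comp (T.continuous.iterate k))
        _ = ∫ x, h x ∂μ := ih
  set a : ℕ → ℝ := fun n => ∫ x, g n x ∂μ with ha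
  set I : ℝ := ∫ x, f x ∂μ with hI
  have hSf : ∀ n : ℕ, Continuous (fun x => ∑ k ∈ Finset.range n, f ((⇑T)^[k] x)) := by
    intro n
    apply continuous_finset_sum
    intro k _
    exact f.continuous.comp (T.continuous.iterate k)
  have hSn : ∀ n : ℕ, ∫ x, (∑ k ∈ Finset.range n, f ((⇑T)^[k] x)) ∂μ = n * I := by
    intro n
    rw [integral_finset_sum (f := fun (k : ℕ) (x : X) => f ((⇑T)^[k] x)) _
      (fun k _ => hint2 f k f.continuous)]
    have : ∀ k ∈ Finset.range n, ∫ x, f ((⇑T)^[k] x) ∂μ = I :=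
      fun k _ => hcompTk f f.continuous k
    rw [Finset.sum_congr rfl this, Finset.sum_const, Finset.card_range, nsmul_eq_mul]
  -- bound |a n - n I|
  have hbound : ∀ n : ℕ, |a n - n * I| ≤
      ⨆ x : X, |g n x - ∑ k ∈ Finset.range n, f ((⇑T)^[k] x)| := by
    intro n
    have hca : Continuous (fun x => |g n x - ∑ k ∈ Finset.range n, f ((⇑T)^[k] x)|) :=
      ((hg n).sub (hSf n)).abs
    have hbdd : BddAbove (Set.range fun x =>
        |g n x - ∑ k ∈ Finset.range n, f ((⇑T)^[k] x)|) :=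
      (isCompact_range hca).bddAbove
    calc |a n - n * I|
        = |∫ x, (g n x - ∑ k ∈ Finset.range n, f ((⇑T)^[k] x)) ∂μ| := by
          rw [integral_sub (hint _ (hg n)) (hint _ (hSf n)), hSn n]
      _ ≤ ∫ x, |g n x - ∑ k ∈ Finset.range n, f ((⇑T)^[k] x)| ∂μ := by
          simpa [Real.norm_eq_abs] using
            norm_integral_le_integral_norm (μ := μ)
              (f := fun x => g n x - ∑ k ∈ Finset.range n, f ((⇑T)^[k] x))
      _ ≤ ∫ _x, (⨆ x : X, |g n x - ∑ k ∈ Finset.range n, f ((⇑T)^[k] x)|) ∂μ := by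
          apply integral_mono (hint _ hca) (integrable_const _)
          exact fun x => le_ciSup hbdd x
      _ = ⨆ x : X, |g n x - ∑ k ∈ Finset.range n, f ((⇑T)^[k] x)| := by
          simp [measure_univ]
  -- convergence of (1/n) a n to I
  have htend : Tendsto (fun n : ℕ => (1 / n : ℝ) * a n) atTop (𝓝 I) := by
    rw [← tendsto_sub_nhds_zero_iff]
    apply squeeze_zero_norm' (a := fun n : ℕ => (1 / n : ℝ) *
      (⨆ x : X, |g n x - ∑ k ∈ Finset.range n, f ((⇑T)^[k] x)|)) _ happrox
    filter_upwards [eventually_ge_atTop 1] with n hn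
    have hn0 : (0 : ℝ) < n := by exact_mod_cast hn
    have h1 : (1 / n : ℝ) * a n - I = (1 / n : ℝ) * (a n - n * I) := by
      field_simp
    rw [h1, Real.norm_eq_abs, abs_mul, abs_of_pos (by positivity : (0:ℝ) < 1 / n)]
    exact mul_le_mul_of_nonneg_left (hbound n) (by positivity)
  -- subadditivity of a
  have hsubadd : ∀ m n : ℕ, a (m + n) ≤ a m + a n := by
    intro m n
    have h1 : a (m + n) ≤ ∫ x, (g m x + g n ((⇑T)^[m] x)) ∂μ := by
      apply integral_mono (hint _ (hg (m + n)))
      · exact (hint _ (hg m)).add (hint2 (g n) m (hg n))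
      · exact fun x => hsub m n x
    have h2 : ∫ x, (g m x + g n ((⇑T)^[m] x)) ∂μ = a m + a n := by
      rw [integral_add (hint _ (hg m)) (hint2 (g n) m (hg n))]
      rw [hcompTk _ (hg n) m]
    linarith
  -- iterated subadditivity
  have hkan : ∀ n k : ℕ, 1 ≤ k → a (k * n) ≤ k * a n := by
    intro n k hk
    induction k with
    | zero => omega
    | succ k ih =>
      rcases Nat.eq_zero_or_pos k with h0 | h0
      · subst h0; simp
      · have := hsubadd (k * n) n
        have := ih h0
        have hkk : (k + 1) * n = k * n + n := by ring
        rw [hkk]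
        push_cast
        nlinarith
  -- lower bound
  have hlow : ∀ n : ℕ, 1 ≤ n → I ≤ (1 / n : ℝ) * a n := by
    intro n hn
    have hn0 : (0 : ℝ) < n := by exact_mod_cast hn
    have hmono : Tendsto (fun k : ℕ => k * n) atTop atTop :=
      tendsto_atTop_atTop_of_monotone' (fun i j hij => Nat.mul_le_mul_right n hij)
        (by
          rintro ⟨c, hc⟩
          have := hc (Set.mem_range_self (c + 1))
          have h2 : c + 1 ≤ (c + 1) * n := Nat.le_mul_of_pos_right _ hn
          omega)
    have hsubseq : Tendsto (fun k : ℕ => (1 / ((k * n : ℕ) : ℝ)) * a (k * n))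
        atTop (𝓝 I) := htend.comp hmono
    apply le_of_tendsto hsubseq
    filter_upwards [eventually_ge_atTop 1] with k hk
    have hk0 : (0 : ℝ) < k := by exact_mod_cast hk
    have h1 : a (k * n) ≤ (k : ℝ) * a n := hkan n k hk
    have h2 : (1 / ((k : ℝ) * n)) * a (k * n) ≤ (1 / ((k : ℝ) * n)) * ((k : ℝ) * a n) :=
      mul_le_mul_of_nonneg_left h1 (by positivity)
    calc (1 / ((k * n : ℕ) : ℝ)) * a (k * n)
        = (1 / ((k : ℝ) * n)) * a (k * n) := by push_cast; ring_nf
      _ ≤ (1 / ((k : ℝ) * n)) * ((k : ℝ) * a n) := h2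
      _ = (1 / n : ℝ) * a n := by field_simp
  -- conclusion
  have hne : {r : ℝ | ∃ n : ℕ, 1 ≤ n ∧ r = (1 / n : ℝ) * ∫ x, g n x ∂μ}.Nonempty :=
    ⟨(1 / (1 : ℕ) : ℝ) * ∫ x, g 1 x ∂μ, 1, le_refl 1, rfl⟩
  have hbddb : BddBelow {r : ℝ | ∃ n : ℕ, 1 ≤ n ∧ r = (1 / n : ℝ) * ∫ x, g n x ∂μ} := by
    refine ⟨I, ?_⟩
    rintro r ⟨n, hn, rfl⟩
    exact hlow n hn
  apply le_antisymm
  · apply ge_of_tendsto htend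
    filter_upwards [eventually_ge_atTop 1] with n hn
    exact csInf_le hbddb ⟨n, hn, rfl⟩
  · apply le_csInf hne
    rintro r ⟨n, hn, rfl⟩
    exact hlow n hn

end Aux

/-- If `Φ_A` is almost additive and `(1/n)‖log‖A^n(·)‖ − S_n f‖_∞ → 0`, then
`χ(μ, A) = ∫ f dμ` for every invariant probability measure `μ`; in particular the
Lyapunov maximizing measures of `A` coincide with the Birkhoff maximizing measures of
`f` and `β(A) = β(f)`. -/
theorem stmt18 {X : Type*} [MetricSpace X] [CompactSpace X] [Nonempty X]
    [MeasurableSpace X] [BorelSpace X] {d : ℕ}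
    (T : X ≃ₜ X)
    (A : X → (EuclideanSpace ℝ (Fin d) →L[ℝ] EuclideanSpace ℝ (Fin d)))
    (hA : Continuous A) (hAunit : ∀ x, IsUnit (A x))
    (C : ℝ) (hC : 0 < C)
    (hmult : ∀ (x : X) (m n : ℕ),
      ‖cocycleProd (⇑T) A (m + n) x‖ ≥
        C * (‖cocycleProd (⇑T) A m x‖ * ‖cocycleProd (⇑T) A n (T^[m] x)‖))
    (f : C(X, ℝ))
    (happrox : Tendsto (fun n : ℕ => (1 / n : ℝ) *
        (⨆ x : X, |Real.log ‖cocycleProd (⇑T) A n x‖ -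
          ∑ k ∈ Finset.range n, f (T^[k] x)|)) atTop (𝓝 0)) :
    (∀ μ : Measure X, IsProbabilityMeasure μ → μ.map (⇑T) = μ →
      lyap (⇑T) A μ = ∫ x, f x ∂μ) ∧
    {μ : Measure X | IsProbabilityMeasure μ ∧ μ.map (⇑T) = μ ∧
        lyap (⇑T) A μ = sSup {r : ℝ | ∃ ν : Measure X, IsProbabilityMeasure ν ∧
          ν.map (⇑T) = ν ∧ r = lyap (⇑T) A ν}}
      = {μ : Measure X | IsProbabilityMeasure μ ∧ μ.map (⇑T) = μ ∧
        ∫ x, f x ∂μ = sSup {r : ℝ | ∃ ν : Measure X, IsProbabilityMeasure ν ∧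
          ν.map (⇑T) = ν ∧ r = ∫ x, f x ∂ν}} ∧
    sSup {r : ℝ | ∃ ν : Measure X, IsProbabilityMeasure ν ∧ ν.map (⇑T) = ν ∧
        r = lyap (⇑T) A ν}
      = sSup {r : ℝ | ∃ ν : Measure X, IsProbabilityMeasure ν ∧ ν.map (⇑T) = ν ∧
        r = ∫ x, f x ∂ν} := by
  classical
  -- basic facts about the cocycle
  have hcont : ∀ n : ℕ, Continuous (fun x => cocycleProd (⇑T) A n x) := by
    intro n
    induction n with
    | zero => simpa [cocycleProd] using continuous_const
    | succ n ih =>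
      show Continuous fun x => A ((⇑T)^[n] x) * cocycleProd (⇑T) A n x
      exact (hA.comp (T.continuous.iterate n)).mul ih
  have hunit : ∀ (n : ℕ) (x : X), IsUnit (cocycleProd (⇑T) A n x) := by
    intro n x
    induction n with
    | zero => simpa [cocycleProd] using isUnit_one
    | succ n ih => exact (hAunit _).mul ih
  have hcomm : ∀ (m n : ℕ) (x : X), cocycleProd (⇑T) A (m + n) x
      = cocycleProd (⇑T) A n ((⇑T)^[m] x) * cocycleProd (⇑T) A m x := by
    intro m n x
    induction n with
    | zero => simp [cocycleProd]
    | succ n ih =>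
      calc cocycleProd (⇑T) A (m + n + 1) x
          = A ((⇑T)^[m + n] x) * cocycleProd (⇑T) A (m + n) x := rfl
        _ = A ((⇑T)^[n] ((⇑T)^[m] x)) *
              (cocycleProd (⇑T) A n ((⇑T)^[m] x) * cocycleProd (⇑T) A m x) := by
            rw [ih, ← Function.iterate_add_apply, Nat.add_comm n m]
        _ = (A ((⇑T)^[n] ((⇑T)^[m] x)) * cocycleProd (⇑T) A n ((⇑T)^[m] x)) *
              cocycleProd (⇑T) A m x := by rw [mul_assoc]
        _ = cocycleProd (⇑T) A (n + 1) ((⇑T)^[m] x) * cocycleProd (⇑T) A m x := rfl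
  -- continuity and subadditivity of the log-norm potential
  have hgsub : (∀ n, Continuous (fun x => Real.log ‖cocycleProd (⇑T) A n x‖)) ∧
      (∀ m n x, Real.log ‖cocycleProd (⇑T) A (m + n) x‖ ≤
        Real.log ‖cocycleProd (⇑T) A m x‖ +
        Real.log ‖cocycleProd (⇑T) A n ((⇑T)^[m] x)‖) := by
    rcases Nat.eq_zero_or_pos d with hd | hd
    · -- trivial case: the space is a subsingleton, all operator norms vanish
      subst hd
      have hzero : ∀ (L : EuclideanSpace ℝ (Fin 0) →L[ℝ] EuclideanSpace ℝ (Fin 0)),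
          ‖L‖ = 0 := by
        intro L
        rw [Subsingleton.elim L 0, norm_zero]
      constructor
      · intro n
        have : (fun x => Real.log ‖cocycleProd (⇑T) A n x‖) = fun _ => (0 : ℝ) :=
          funext fun x => by rw [hzero, Real.log_zero]
        rw [this]; exact continuous_const
      · intro m n x
        rw [hzero, hzero, hzero, Real.log_zero]
        norm_num
    · -- nontrivial case
      haveI : Nonempty (Fin d) := ⟨⟨0, hd⟩⟩
      haveI hE : Nontrivial (EuclideanSpace ℝ (Fin d)) := inferInstance
      have hone : (1 : EuclideanSpace ℝ (Fin d) →L[ℝ] EuclideanSpace ℝ (Fin d)) ≠ 0 := by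
        intro h
        obtain ⟨v, hv⟩ := exists_ne (0 : EuclideanSpace ℝ (Fin d))
        have hv2 : (1 : EuclideanSpace ℝ (Fin d) →L[ℝ] EuclideanSpace ℝ (Fin d)) v
            = (0 : EuclideanSpace ℝ (Fin d) →L[ℝ] EuclideanSpace ℝ (Fin d)) v := by rw [h]
        simp only [ContinuousLinearMap.one_apply, ContinuousLinearMap.zero_apply] at hv2
        exact hv hv2
      haveI : Nontrivial (EuclideanSpace ℝ (Fin d) →L[ℝ] EuclideanSpace ℝ (Fin d)) :=
        ⟨1, 0, hone⟩
      have hne : ∀ (n : ℕ) (x : X), ‖cocycleProd (⇑T) A n x‖ ≠ 0 := by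
        intro n x
        exact norm_ne_zero_iff.mpr (hunit n x).ne_zero
      have hpos : ∀ (n : ℕ) (x : X), 0 < ‖cocycleProd (⇑T) A n x‖ :=
        fun n x => lt_of_le_of_ne (norm_nonneg _) (Ne.symm (hne n x))
      constructor
      · intro n
        exact Real.continuousOn_log.comp_continuous (hcont n).norm
          (fun x => Set.mem_compl_singleton_iff.mpr (hne n x))
      · intro m n x
        have h1 : ‖cocycleProd (⇑T) A (m + n) x‖ ≤
            ‖cocycleProd (⇑T) A n ((⇑T)^[m] x)‖ * ‖cocycleProd (⇑T) A m x‖ := by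
          rw [hcomm m n x]
          exact norm_mul_le _ _
        calc Real.log ‖cocycleProd (⇑T) A (m + n) x‖
            ≤ Real.log (‖cocycleProd (⇑T) A n ((⇑T)^[m] x)‖ *
                ‖cocycleProd (⇑T) A m x‖) :=
              Real.log_le_log (hpos (m + n) x) h1
          _ = Real.log ‖cocycleProd (⇑T) A n ((⇑T)^[m] x)‖ +
                Real.log ‖cocycleProd (⇑T) A m x‖ := Real.log_mul (hne n _) (hne m x)
          _ = _ := add_comm _ _
  have h1 : ∀ μ : Measure X, IsProbabilityMeasure μ → μ.map (⇑T) = μ →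
      lyap (⇑T) A μ = ∫ x, f x ∂μ := by
    intro μ hμ hinv
    unfold lyap
    exact key_lemma T (fun n x => Real.log ‖cocycleProd (⇑T) A n x‖)
      hgsub.1 hgsub.2 f happrox μ hμ hinv
  have hsets : {r : ℝ | ∃ ν : Measure X, IsProbabilityMeasure ν ∧ ν.map (⇑T) = ν ∧
        r = lyap (⇑T) A ν}
      = {r : ℝ | ∃ ν : Measure X, IsProbabilityMeasure ν ∧ ν.map (⇑T) = ν ∧
        r = ∫ x, f x ∂ν} := by
    ext r
    constructor
    · rintro ⟨ν, hp, hi, rfl⟩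
      exact ⟨ν, hp, hi, h1 ν hp hi⟩
    · rintro ⟨ν, hp, hi, rfl⟩
      exact ⟨ν, hp, hi, (h1 ν hp hi).symm⟩
  refine ⟨h1, ?_, by rw [hsets]⟩
  ext μ
  simp only [Set.mem_setOf_eq]
  constructor
  · rintro ⟨hp, hi, he⟩
    exact ⟨hp, hi, by rw [← h1 μ hp hi, he, hsets]⟩
  · rintro ⟨hp, hi, he⟩
    exact ⟨hp, hi, by rw [h1 μ hp hi, he, hsets]⟩
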